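/- For all x ∈ ℝ and ρ > 0, the partial derivative of H with respect to x satisfies |∂H/∂x (x, ρ)| ≤ π · min(1/ρ², π/(2ρ)), where H(x, ρ) = (1/π) ∫₀^π cos(x(θ + sin θ))/(ρ² + sin²θ) dθ. -/

import Mathlib

open Real intervalIntegral MeasureTheory

lemma dpos (ρ : ℝ) (hρ : 0 < ρ) (θ : ℝ) : 0 < ρ ^ 2 + Real.sin θ ^ 2 :=
  lt_of_lt_of_le (pow_pos hρ 2) (le_add_of_nonneg_right (sq_nonneg _))

lemma fcont (ρ : ℝ) (hρ : 0 < ρ) :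
    Continuous (fun θ : ℝ => 1 / (ρ ^ 2 + Real.sin θ ^ 2)) := by
  apply continuous_const.div (by continuity)
  exact fun θ => (dpos ρ hρ θ).ne'

-- exact value bound for the model integral
lemma model_integral (ρ : ℝ) (hρ : 0 < ρ) :
    (∫ θ in (0:ℝ)..(π/2), 1 / (ρ ^ 2 + (2 * θ / π) ^ 2)) ≤ π ^ 2 / (4 * ρ) := by
  have hπ : (0:ℝ) < π := pi_pos
  have hΦ : ∀ θ ∈ Set.uIcc (0:ℝ) (π/2),
      HasDerivAt (fun t : ℝ => (π / (2 * ρ)) * Real.arctan (2 * t / (π * ρ)))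
        (1 / (ρ ^ 2 + (2 * θ / π) ^ 2)) θ := by
    intro θ _
    have h1 : HasDerivAt (fun t : ℝ => 2 * t / (π * ρ)) (2 / (π * ρ)) θ := by
      simpa [mul_div_assoc, mul_comm] using
        ((hasDerivAt_id θ).const_mul (2 / (π * ρ)))
    have h2 := (Real.hasDerivAt_arctan (2 * θ / (π * ρ))).comp θ h1
    have h3 := h2.const_mul (π / (2 * ρ))
    refine h3.congr_deriv ?_
    have : (0:ℝ) < π * ρ := by positivity
    field_simp
  have hint : IntervalIntegrable (fun θ : ℝ => 1 / (ρ ^ 2 + (2 * θ / π) ^ 2))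
      MeasureTheory.volume 0 (π/2) := by
    apply Continuous.intervalIntegrable
    apply continuous_const.div (by continuity)
    intro θ
    have : (0:ℝ) < ρ ^ 2 + (2 * θ / π) ^ 2 :=
      lt_of_lt_of_le (pow_pos hρ 2) (le_add_of_nonneg_right (sq_nonneg _))
    exact this.ne'
  rw [intervalIntegral.integral_eq_sub_of_hasDerivAt hΦ hint]
  have : 2 * (π / 2) / (π * ρ) = 1 / ρ := by field_simp
  rw [this]
  simp only [mul_zero, zero_div, Real.arctan_zero, sub_zero]
  have harctan : Real.arctan (1/ρ) ≤ π / 2 := (Real.arctan_lt_pi_div_two _).le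
  calc π / (2 * ρ) * Real.arctan (1/ρ) ≤ π / (2 * ρ) * (π / 2) := by
        apply mul_le_mul_of_nonneg_left harctan (by positivity)
    _ = π ^ 2 / (4 * ρ) := by ring

lemma I_le_one (ρ : ℝ) (hρ : 0 < ρ) :
    (∫ θ in (0:ℝ)..π, 1 / (ρ ^ 2 + Real.sin θ ^ 2)) ≤ π * (1 / ρ ^ 2) := by
  have hπ : (0:ℝ) < π := pi_pos
  calc (∫ θ in (0:ℝ)..π, 1 / (ρ ^ 2 + Real.sin θ ^ 2))
      ≤ ∫ θ in (0:ℝ)..π, 1 / ρ ^ 2 := by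
        apply intervalIntegral.integral_mono_on hπ.le
          ((fcont ρ hρ).intervalIntegrable _ _)
          (intervalIntegrable_const)
        intro θ _
        apply one_div_le_one_div_of_le (pow_pos hρ 2)
        exact le_add_of_nonneg_right (sq_nonneg _)
    _ = π * (1 / ρ ^ 2) := by simp [mul_comm]

lemma I_le_two (ρ : ℝ) (hρ : 0 < ρ) :
    (∫ θ in (0:ℝ)..π, 1 / (ρ ^ 2 + Real.sin θ ^ 2)) ≤ π * (π / (2 * ρ)) := by
  have hπ : (0:ℝ) < π := pi_pos
  set f : ℝ → ℝ := fun θ => 1 / (ρ ^ 2 + Real.sin θ ^ 2) with hf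
  have hfc : Continuous f := fcont ρ hρ
  have hsplit : (∫ θ in (0:ℝ)..π, f θ)
      = (∫ θ in (0:ℝ)..(π/2), f θ) + ∫ θ in (π/2)..π, f θ :=
    (intervalIntegral.integral_add_adjacent_intervals
      (hfc.intervalIntegrable _ _) (hfc.intervalIntegrable _ _)).symm
  have hsym : (∫ θ in (π/2)..π, f θ) = ∫ θ in (0:ℝ)..(π/2), f θ := by
    have := intervalIntegral.integral_comp_sub_left (a := (0:ℝ)) (b := π/2) f π
    simp only [sub_zero] at this
    have h2 : (fun θ : ℝ => f (π - θ)) = f := by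
      funext θ; simp [hf, Real.sin_pi_sub]
    rw [h2] at this
    rw [show π - π/2 = π/2 by ring] at this
    exact this.symm
  have hJ : (∫ θ in (0:ℝ)..(π/2), f θ) ≤ π ^ 2 / (4 * ρ) := by
    refine le_trans ?_ (model_integral ρ hρ)
    apply intervalIntegral.integral_mono_on (by positivity)
      (hfc.intervalIntegrable _ _)
    · apply Continuous.intervalIntegrable
      apply continuous_const.div (by continuity)
      intro θ
      exact (lt_of_lt_of_le (pow_pos hρ 2) (le_add_of_nonneg_right (sq_nonneg _))).ne'
    · intro θ hθ
      apply one_div_le_one_div_of_le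
        (lt_of_lt_of_le (pow_pos hρ 2) (le_add_of_nonneg_right (sq_nonneg _)))
      have h1 : 2 / π * θ ≤ Real.sin θ := Real.mul_le_sin hθ.1 hθ.2
      have hs : 0 ≤ Real.sin θ := Real.sin_nonneg_of_nonneg_of_le_pi hθ.1
        (by linarith [hθ.2, hπ.le])
      have h2 : (0:ℝ) ≤ 2 * θ / π := div_nonneg (by linarith [hθ.1]) hπ.le
      have h23 : 2 * θ / π = 2 / π * θ := by ring
      have hsq : (2 * θ / π) ^ 2 ≤ Real.sin θ ^ 2 := by
        apply sq_le_sq' (by linarith) (by rw [h23]; exact h1)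
      linarith
  calc (∫ θ in (0:ℝ)..π, f θ) = (∫ θ in (0:ℝ)..(π/2), f θ) + ∫ θ in (π/2)..π, f θ := hsplit
    _ = 2 * ∫ θ in (0:ℝ)..(π/2), f θ := by rw [hsym]; ring
    _ ≤ 2 * (π ^ 2 / (4 * ρ)) := by linarith
    _ = π * (π / (2 * ρ)) := by ring

theorem good_H_deriv_x_bound (x ρ : ℝ) (hρ : 0 < ρ) :
    |deriv (fun y : ℝ =>
        (1 / π) * ∫ θ in (0:ℝ)..π, Real.cos (y * (θ + Real.sin θ)) / (ρ ^ 2 + Real.sin θ ^ 2)) x| ≤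
      π * min (1 / ρ ^ 2) (π / (2 * ρ)) := by
  have hπ : (0:ℝ) < π := pi_pos
  set F : ℝ → ℝ → ℝ := fun y θ => Real.cos (y * (θ + Real.sin θ)) / (ρ ^ 2 + Real.sin θ ^ 2)
    with hF
  set F' : ℝ → ℝ → ℝ :=
    fun y θ => -Real.sin (y * (θ + Real.sin θ)) * (θ + Real.sin θ) / (ρ ^ 2 + Real.sin θ ^ 2)
    with hF'
  have hFc : ∀ y, Continuous (F y) := by
    intro y
    apply Continuous.div (by continuity) (by continuity)
    exact fun θ => (dpos ρ hρ θ).ne'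
  have hF'c : ∀ y, Continuous (F' y) := by
    intro y
    apply Continuous.div (by continuity) (by continuity)
    exact fun θ => (dpos ρ hρ θ).ne'
  have hdiff : ∀ θ y : ℝ, HasDerivAt (fun z => F z θ) (F' y θ) y := by
    intro θ y
    have h1 : HasDerivAt (fun z : ℝ => z * (θ + Real.sin θ)) (θ + Real.sin θ) y :=
      hasDerivAt_mul_const _
    have h2 := (Real.hasDerivAt_cos (y * (θ + Real.sin θ))).comp y h1
    exact h2.div_const _
  have hbound : ∀ θ ∈ Set.uIoc (0:ℝ) π, ∀ y : ℝ,
      ‖F' y θ‖ ≤ π * (1 / (ρ ^ 2 + Real.sin θ ^ 2)) := by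
    intro θ hθ y
    rw [Set.uIoc_of_le hπ.le] at hθ
    have hθ0 : 0 < θ := hθ.1
    have hθπ : θ ≤ π := hθ.2
    have hs : 0 ≤ Real.sin θ := Real.sin_nonneg_of_nonneg_of_le_pi hθ0.le hθπ
    have hsum : 0 ≤ θ + Real.sin θ := by linarith
    have hsumπ : θ + Real.sin θ ≤ π := by
      rcases le_or_gt θ (π/2) with h | h
      · have h3 : (3:ℝ) < π := Real.pi_gt_three
        have := Real.sin_le_one θ; linarith
      · have : Real.sin θ = Real.sin (π - θ) := (Real.sin_pi_sub θ).symm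
        have h2 : Real.sin (π - θ) ≤ π - θ :=
          Real.sin_le (by linarith)
        linarith
    have hd := dpos ρ hρ θ
    rw [hF']
    rw [Real.norm_eq_abs, abs_div, abs_of_pos hd, div_le_iff₀ hd]
    have : |(-Real.sin (y * (θ + Real.sin θ))) * (θ + Real.sin θ)| ≤ 1 * π := by
      rw [abs_mul]
      apply mul_le_mul _ _ (abs_nonneg _) zero_le_one
      · rw [abs_neg]; exact Real.abs_sin_le_one _
      · rw [abs_of_nonneg hsum]; exact hsumπ
    calc |(-Real.sin (y * (θ + Real.sin θ))) * (θ + Real.sin θ)| ≤ 1 * π := this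
      _ = π := one_mul _
      _ ≤ π * (1 / (ρ ^ 2 + Real.sin θ ^ 2)) * (ρ ^ 2 + Real.sin θ ^ 2) := by
          rw [mul_assoc, one_div_mul_cancel hd.ne', mul_one]
  have key : HasDerivAt (fun y => ∫ θ in (0:ℝ)..π, F y θ) (∫ θ in (0:ℝ)..π, F' x θ) x := by
    have := intervalIntegral.hasDerivAt_integral_of_dominated_loc_of_deriv_le
      (F := F) (F' := F') (x₀ := x) (a := 0) (b := π)
      (bound := fun θ => π * (1 / (ρ ^ 2 + Real.sin θ ^ 2))) (s := Set.univ) (μ := MeasureTheory.volume)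
      Filter.univ_mem
      (Filter.Eventually.of_forall fun y => ((hFc y).aestronglyMeasurable).restrict)
      ((hFc x).intervalIntegrable _ _)
      (((hF'c x).aestronglyMeasurable).restrict)
      (MeasureTheory.ae_of_all _ fun θ hθ y _ => hbound θ hθ y)
      ((Continuous.intervalIntegrable (by exact continuous_const.mul (fcont ρ hρ)) _ _))
      (MeasureTheory.ae_of_all _ fun θ _ y _ => hdiff θ y)
    exact this.2
  have hderiv : deriv (fun y : ℝ => (1 / π) * ∫ θ in (0:ℝ)..π, F y θ) x
      = (1 / π) * ∫ θ in (0:ℝ)..π, F' x θ := by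
    simpa using (key.const_mul (1 / π)).deriv
  rw [show (fun y : ℝ =>
        (1 / π) * ∫ θ in (0:ℝ)..π, Real.cos (y * (θ + Real.sin θ)) / (ρ ^ 2 + Real.sin θ ^ 2))
      = fun y : ℝ => (1 / π) * ∫ θ in (0:ℝ)..π, F y θ from rfl, hderiv]
  have hIbound : |∫ θ in (0:ℝ)..π, F' x θ|
      ≤ π * ∫ θ in (0:ℝ)..π, 1 / (ρ ^ 2 + Real.sin θ ^ 2) := by
    rw [show π * ∫ θ in (0:ℝ)..π, 1 / (ρ ^ 2 + Real.sin θ ^ 2)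
        = ∫ θ in (0:ℝ)..π, π * (1 / (ρ ^ 2 + Real.sin θ ^ 2)) from
      (intervalIntegral.integral_const_mul _ _).symm]
    calc |∫ θ in (0:ℝ)..π, F' x θ| ≤ ∫ θ in (0:ℝ)..π, |F' x θ| := by
          simpa [Real.norm_eq_abs] using
            intervalIntegral.norm_integral_le_integral_norm (f := F' x) hπ.le
      _ ≤ ∫ θ in (0:ℝ)..π, π * (1 / (ρ ^ 2 + Real.sin θ ^ 2)) := by
          apply intervalIntegral.integral_mono_on hπ.le
            ((hF'c x).abs.intervalIntegrable _ _)
            ((continuous_const.mul (fcont ρ hρ)).intervalIntegrable _ _)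
          intro θ hθ
          have : θ ∈ Set.uIoc (0:ℝ) π ∨ θ = 0 := by
            rw [Set.uIoc_of_le hπ.le]
            rcases eq_or_lt_of_le hθ.1 with h | h
            · right; exact h.symm
            · left; exact ⟨h, hθ.2⟩
          rcases this with h | h
          · simpa [Real.norm_eq_abs] using hbound θ h x
          · subst h
            simp [hF']
            positivity
      _ = ∫ θ in (0:ℝ)..π, π * (1 / (ρ ^ 2 + Real.sin θ ^ 2)) := rfl
  have hI1 := I_le_one ρ hρ
  have hI2 := I_le_two ρ hρ
  rw [abs_mul, abs_of_pos (by positivity : (0:ℝ) < 1/π)]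
  have hle : 1/π * |∫ θ in (0:ℝ)..π, F' x θ|
      ≤ ∫ θ in (0:ℝ)..π, 1 / (ρ ^ 2 + Real.sin θ ^ 2) := by
    calc 1/π * |∫ θ in (0:ℝ)..π, F' x θ|
        ≤ 1/π * (π * ∫ θ in (0:ℝ)..π, 1 / (ρ ^ 2 + Real.sin θ ^ 2)) :=
          mul_le_mul_of_nonneg_left hIbound (by positivity)
      _ = ∫ θ in (0:ℝ)..π, 1 / (ρ ^ 2 + Real.sin θ ^ 2) := by field_simp
  rw [show π * min (1 / ρ ^ 2) (π / (2 * ρ))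
      = min (π * (1 / ρ ^ 2)) (π * (π / (2 * ρ))) by
    rcases min_cases (1 / ρ ^ 2) (π / (2 * ρ)) with ⟨h1, h2⟩ | ⟨h1, h2⟩ <;>
      rw [h1] <;> [rw [min_eq_left]; rw [min_eq_right]] <;> nlinarith [pi_pos]]
  exact le_min (hle.trans hI1) (hle.trans hI2)
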